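/- A symmetric linear functional φ on l_{1,∞} is positive and normalised (i.e., φ(x) ≥ 0 for x ≥ 0 and φ({1/(n+1)}_{n≥0}) = 1) if and only if the functional B := φ ∘ D on l_∞ is a Banach limit. -/

import Mathlib

open scoped BigOperators

/-- The decreasing rearrangement of a real sequence:
`x^*_n = inf { t ≥ 0 : #{k : |x_k| > t} ≤ n }`. -/
noncomputable def dRear (x : ℕ → ℝ) (n : ℕ) : ℝ :=
  sInf {t : ℝ | 0 ≤ t ∧ {k : ℕ | t < |x k|}.encard ≤ n}

/-- Membership in the weak-`l₁` space `l_{1,∞}`. -/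
def MemL1w (x : ℕ → ℝ) : Prop :=
  BddAbove (Set.range fun n : ℕ => ((n : ℝ) + 1) * dRear x n)

/-- Membership in `l_∞`: the sequence is bounded. -/
def Bdd (x : ℕ → ℝ) : Prop := ∃ M : ℝ, ∀ n : ℕ, |x n| ≤ M

/-- The right shift `S` on sequences: `(Sx)_0 = 0`, `(Sx)_{n+1} = x_n`. -/
def Sfun (x : ℕ → ℝ) : ℕ → ℝ
  | 0 => 0
  | n + 1 => x n

/-- `φ` is a linear functional on `l_{1,∞}`. -/
def IsLinearL1w (φ : (ℕ → ℝ) → ℝ) : Prop :=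
  (∀ x y : ℕ → ℝ, MemL1w x → MemL1w y → φ (x + y) = φ x + φ y) ∧
  (∀ (c : ℝ) (x : ℕ → ℝ), MemL1w x → φ (c • x) = c * φ x)

/-- `φ` is a symmetric functional on `l_{1,∞}`. -/
def IsSymmetricL1w (φ : (ℕ → ℝ) → ℝ) : Prop :=
  ∀ x y : ℕ → ℝ, MemL1w x → MemL1w y → 0 ≤ x → 0 ≤ y →
    dRear x = dRear y → φ x = φ y

/-- `θ` is a linear functional on `l_∞`. -/
def IsLinearLinfty (θ : (ℕ → ℝ) → ℝ) : Prop :=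
  (∀ x y : ℕ → ℝ, Bdd x → Bdd y → θ (x + y) = θ x + θ y) ∧
  (∀ (c : ℝ) (x : ℕ → ℝ), Bdd x → θ (c • x) = c * θ x)

/-- `θ` is `S`-invariant on `l_∞`. -/
def SInvariant (θ : (ℕ → ℝ) → ℝ) : Prop :=
  ∀ x : ℕ → ℝ, Bdd x → θ (Sfun x) = θ x

/-- The operator `D : l_∞ → l_{1,∞}`, `(Dx)_k = (log 2) · x_n / 2^n` whenever
`2^n - 1 ≤ k ≤ 2^{n+1} - 2`. -/
noncomputable def Dop (x : ℕ → ℝ) : ℕ → ℝ := fun k =>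
  Real.log 2 * x (Nat.log 2 (k + 1)) / 2 ^ (Nat.log 2 (k + 1))

/-- The sequence of dyadic block sums of the decreasing rearrangement of `x`. -/
noncomputable def blockSeq (x : ℕ → ℝ) : ℕ → ℝ := fun n =>
  ∑ k ∈ Finset.Icc (2 ^ n - 1) (2 ^ (n + 1) - 2), dRear x k

/-- `φ` is a positive functional on `l_{1,∞}`. -/
def IsPositiveL1w (φ : (ℕ → ℝ) → ℝ) : Prop :=
  ∀ x : ℕ → ℝ, MemL1w x → 0 ≤ x → 0 ≤ φ x

/-- `B` is a Banach limit: a positive, normalised (`B 𝟙 = 1`), shift-invariant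
linear functional on `l_∞`. -/
def IsBanachLimit (B : (ℕ → ℝ) → ℝ) : Prop :=
  IsLinearLinfty B ∧
  (∀ x : ℕ → ℝ, Bdd x → 0 ≤ x → 0 ≤ B x) ∧
  B (fun _ => (1 : ℝ)) = 1 ∧
  SInvariant B
namespace Stmt9

noncomputable def har : ℕ → ℝ := fun n => 1 / ((n : ℝ) + 1)

lemma har_pos (n : ℕ) : 0 < har n := by
  have : (0:ℝ) < (n:ℝ) + 1 := by positivity
  simpa [har] using this

lemma har_nonneg (n : ℕ) : 0 ≤ har n := (har_pos n).le

lemma encard_le_of_subset_range {s : Set ℕ} {n : ℕ} (h : ∀ k ∈ s, k < n) :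
    s.encard ≤ n := by
  have h1 : s ⊆ ↑(Finset.range n) := by
    intro k hk; simpa using h k hk
  calc s.encard ≤ (↑(Finset.range n) : Set ℕ).encard := Set.encard_mono h1
    _ = n := by rw [Set.encard_coe_eq_coe_finsetCard, Finset.card_range]

/-- helper: the defining set of `dRear`. -/
def RSet (x : ℕ → ℝ) (n : ℕ) : Set ℝ :=
  {t : ℝ | 0 ≤ t ∧ {k : ℕ | t < |x k|}.encard ≤ n}

lemma dRear_eq_sInf (x : ℕ → ℝ) (n : ℕ) : dRear x n = sInf (RSet x n) := rfl

lemma dRear_nonneg (x : ℕ → ℝ) (n : ℕ) : 0 ≤ dRear x n :=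
  Real.sInf_nonneg (fun _ ht => ht.1)

lemma dRear_le {x : ℕ → ℝ} {n : ℕ} {t : ℝ} (ht0 : 0 ≤ t)
    (ht : {k : ℕ | t < |x k|}.encard ≤ n) : dRear x n ≤ t :=
  csInf_le ⟨0, fun _ hu => hu.1⟩ ⟨ht0, ht⟩

lemma dRear_congr_abs {x y : ℕ → ℝ} (h : ∀ k, |x k| = |y k|) : dRear x = dRear y := by
  funext n
  unfold dRear
  congr 1
  ext t
  simp only [Set.mem_setOf_eq]
  constructor <;> (rintro ⟨h0, h1⟩; refine ⟨h0, ?_⟩)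
  · convert h1 using 2; ext k; simp [h k]
  · convert h1 using 2; ext k; simp [h k]

/-- characterization for antitone nonneg sequences -/
lemma dRear_of_antitone {x : ℕ → ℝ} (hx : Antitone x) (h0 : ∀ k, 0 ≤ x k) :
    dRear x = x := by
  funext n
  have hset : RSet x n = Set.Ici (x n) := by
    ext t
    simp only [RSet, Set.mem_setOf_eq, Set.mem_Ici]
    constructor
    · rintro ⟨ht0, hte⟩
      by_contra hlt
      push_neg at hlt
      have hsub : ↑(Finset.range (n+1)) ⊆ {k : ℕ | t < |x k|} := by
        intro k hk
        simp only [Finset.coe_range, Set.mem_Iio] at hk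
        have : x n ≤ x k := hx (Nat.lt_succ_iff.mp hk)
        have : t < x k := lt_of_lt_of_le hlt this
        simpa [abs_of_nonneg (h0 k)] using this
      have := Set.encard_mono hsub
      rw [Set.encard_coe_eq_coe_finsetCard, Finset.card_range] at this
      have h2 := le_trans this hte
      norm_cast at h2
      omega
    · intro h
      refine ⟨le_trans (h0 n) h, encard_le_of_subset_range ?_⟩
      intro k hk
      simp only [Set.mem_setOf_eq, abs_of_nonneg (h0 k)] at hk
      by_contra hkn
      push_neg at hkn
      exact absurd (lt_of_le_of_lt (le_trans (hx hkn) h) hk) (lt_irrefl _)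
  rw [dRear_eq_sInf, hset, csInf_Ici]

/-- nonemptiness propagates down -/
lemma rset_nonempty_pred {x : ℕ → ℝ} {n : ℕ} (h : (RSet x (n+1)).Nonempty) :
    (RSet x n).Nonempty := by
  obtain ⟨t, ht0, hte⟩ := h
  set F := {k : ℕ | t < |x k|} with hF
  have hFfin : F.Finite := Set.finite_of_encard_le_coe hte
  rcases F.eq_empty_or_nonempty with hFe | hFne
  · exact ⟨t, ht0, by rw [← hF, hFe]; simp⟩
  · obtain ⟨k₀, hk₀, hmin⟩ := Set.Finite.exists_minimalFor (fun k => |x k|) F hFfin hFne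
    refine ⟨|x k₀|, abs_nonneg _, ?_⟩
    have hsub : {k : ℕ | |x k₀| < |x k|} ⊆ F \ {k₀} := by
      intro k hk
      simp only [Set.mem_setOf_eq] at hk
      have hkF : k ∈ F := by
        rw [hF]; exact Set.mem_setOf_eq ▸ lt_trans hk₀ hk
      refine ⟨hkF, ?_⟩
      simp only [Set.mem_singleton_iff]
      intro hkk
      subst hkk
      exact lt_irrefl _ hk
    calc {k : ℕ | |x k₀| < |x k|}.encard ≤ (F \ {k₀}).encard := Set.encard_mono hsub
      _ = F.encard - 1 := Set.encard_diff_singleton_of_mem hk₀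
      _ ≤ (↑(n+1) : ℕ∞) - 1 := by exact tsub_le_tsub_right hte 1
      _ = (n : ℕ∞) := by
          norm_cast

end Stmt9
namespace Stmt9

lemma rset_nonempty_le {x : ℕ → ℝ} {m n : ℕ} (h : m ≤ n) :
    (RSet x n).Nonempty → (RSet x m).Nonempty := by
  induction n with
  | zero => intro h1; simpa [Nat.le_zero.mp h] using h1
  | succ n ih =>
    intro h1
    rcases Nat.lt_succ_iff_lt_or_eq.mp (Nat.lt_succ_of_le h) with h2 | h2
    · exact ih (Nat.lt_succ_iff.mp h2) (rset_nonempty_pred h1)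
    · subst h2; exact h1

lemma dRear_antitone (x : ℕ → ℝ) : Antitone (dRear x) := by
  intro m n hmn
  rcases (RSet x m).eq_empty_or_nonempty with he | hne
  · rcases (RSet x n).eq_empty_or_nonempty with he2 | hne2
    · simp [dRear_eq_sInf, he, he2]
    · exact absurd (rset_nonempty_le hmn hne2) (by simp [he])
  · refine csInf_le_csInf ⟨0, fun _ hu => hu.1⟩ hne ?_
    intro t ht
    exact ⟨ht.1, le_trans ht.2 (by exact_mod_cast Nat.cast_le.mpr hmn)⟩

lemma dRear_idem (x : ℕ → ℝ) : dRear (dRear x) = dRear x :=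
  dRear_of_antitone (dRear_antitone x) (dRear_nonneg x)

/-- invariance of dRear under spreading along an injection, with zeros elsewhere -/
lemma dRear_spread {x y : ℕ → ℝ} (f : ℕ → ℕ) (hf : Function.Injective f)
    (hy1 : ∀ m, y (f m) = x m) (hy2 : ∀ k, k ∉ Set.range f → y k = 0) :
    dRear y = dRear x := by
  funext n
  unfold dRear
  congr 1
  ext t
  simp only [Set.mem_setOf_eq]
  constructor <;> rintro ⟨ht0, hte⟩ <;> refine ⟨ht0, ?_⟩ <;>
    [skip; skip] <;>
    (first | skip)
  · have hset : {m : ℕ | t < |x m|} = f ⁻¹' {k : ℕ | t < |y k|} := by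
      ext m; simp [hy1 m]
    have hsub : f '' {m : ℕ | t < |x m|} ⊆ {k : ℕ | t < |y k|} := by
      rw [hset]; exact Set.image_preimage_subset f _
    calc {m : ℕ | t < |x m|}.encard
        = (f '' {m : ℕ | t < |x m|}).encard := (Set.InjOn.encard_image (hf.injOn)).symm
      _ ≤ {k : ℕ | t < |y k|}.encard := Set.encard_mono hsub
      _ ≤ n := hte
  · have hset : {k : ℕ | t < |y k|} = f '' {m : ℕ | t < |x m|} := by
      ext k
      simp only [Set.mem_setOf_eq, Set.mem_image]
      constructor
      · intro hk
        have hk0 : y k ≠ 0 := by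
          intro h0; rw [h0] at hk; simp at hk; exact absurd (lt_of_le_of_lt ht0 hk) (by simp)
        rcases Set.not_notMem.mp (fun h => hk0 (hy2 k h)) with ⟨m, rfl⟩
        exact ⟨m, by rwa [← hy1 m], rfl⟩
      · rintro ⟨m, hm, rfl⟩
        rwa [hy1 m]
    rw [hset, Set.InjOn.encard_image (hf.injOn)]
    exact hte

lemma dRear_comp_bijective {x : ℕ → ℝ} {σ : ℕ → ℕ} (hσ : Function.Bijective σ) :
    dRear (fun k => x (σ k)) = dRear x := by
  funext n
  unfold dRear
  congr 1
  ext t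
  simp only [Set.mem_setOf_eq]
  have hset : {k : ℕ | t < |x (σ k)|} = σ ⁻¹' {j : ℕ | t < |x j|} := rfl
  have hcard : {k : ℕ | t < |x (σ k)|}.encard = {j : ℕ | t < |x j|}.encard := by
    rw [hset]
    rw [show σ ⁻¹' {j : ℕ | t < |x j|} = ⇑(Equiv.ofBijective σ hσ) ⁻¹' {j : ℕ | t < |x j|} from rfl]
    rw [← Equiv.image_symm_eq_preimage (Equiv.ofBijective σ hσ) _,
      Set.InjOn.encard_image ((Equiv.ofBijective σ hσ).symm.injective.injOn)]
  rw [hcard]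

/-- Chebyshev-type bound -/
lemma dRear_le_harmonic {x : ℕ → ℝ} {C : ℝ} (hC : 0 ≤ C)
    (hx : ∀ k, |x k| ≤ C / ((k : ℝ) + 1)) (n : ℕ) :
    dRear x n ≤ C / ((n : ℝ) + 1) := by
  refine dRear_le (by positivity) (encard_le_of_subset_range ?_)
  intro k hk
  simp only [Set.mem_setOf_eq] at hk
  have h1 : C / ((n:ℝ)+1) < C / ((k:ℝ)+1) := lt_of_lt_of_le hk (hx k)
  have hCpos : 0 < C := by
    by_contra h
    push_neg at h
    have : C = 0 := le_antisymm h hC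
    rw [this] at h1; simp at h1
  have := (div_lt_div_iff_of_pos_left hCpos (by positivity) (by positivity)).mp h1
  by_contra hkn
  push_neg at hkn
  have : (n:ℝ) + 1 ≤ (k:ℝ) + 1 := by
    have : ((n:ℕ):ℝ) ≤ ((k:ℕ):ℝ) := Nat.cast_le.mpr hkn; linarith
  linarith

lemma memL1w_of_harmonic_bound {x : ℕ → ℝ} {C : ℝ}
    (hx : ∀ k, |x k| ≤ C / ((k : ℝ) + 1)) : MemL1w x := by
  have hC : 0 ≤ C := by
    have := hx 0
    have h0 := abs_nonneg (x 0)
    simp at this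
    linarith
  refine ⟨C, ?_⟩
  rintro v ⟨n, rfl⟩
  have h1 := dRear_le_harmonic hC hx n
  have h2 : (0:ℝ) < (n:ℝ) + 1 := by positivity
  calc ((n:ℝ)+1) * dRear x n ≤ ((n:ℝ)+1) * (C / ((n:ℝ)+1)) := by
        exact mul_le_mul_of_nonneg_left h1 h2.le
    _ = C := by field_simp

/-- quadratic tail bound -/
lemma dRear_quad_tail {x : ℕ → ℝ} {C : ℝ} {K : ℕ} (hC : 0 ≤ C)
    (hx : ∀ k, |x k| ≤ C / ((k : ℝ) + 1) ^ 2) (hx0 : ∀ k, k < K → x k = 0) (n : ℕ) :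
    dRear x n ≤ C / ((K : ℝ) + 1) / ((n : ℝ) + 1) := by
  rcases eq_or_lt_of_le hC with hC0 | hCpos
  · have : ∀ k, x k = 0 := by
      intro k
      have := hx k
      rw [← hC0] at this
      simpa using abs_eq_zero.mp (le_antisymm (by simpa using this) (abs_nonneg _))
    refine le_trans (dRear_le le_rfl ?_) (by positivity)
    convert Set.encard_empty ▸ (zero_le : (0:ℕ∞) ≤ n)
    ext k; simp [this k]
  · set t : ℝ := C / (((K:ℝ) + 1) * ((K:ℝ) + (n:ℝ) + 1)) with htdef
    have ht0 : 0 < t := by positivity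
    have hle : dRear x n ≤ t := by
      refine dRear_le ht0.le ?_
      have hsub : ∀ k ∈ {k : ℕ | t < |x k|}, K ≤ k ∧ k < K + n := by
        intro k hk
        simp only [Set.mem_setOf_eq] at hk
        constructor
        · by_contra h
          push_neg at h
          rw [hx0 k h] at hk
          simp at hk
          exact absurd (lt_of_le_of_lt ht0.le hk) (by simp)
        · have h1 : t < C / ((k:ℝ)+1)^2 := lt_of_lt_of_le hk (hx k)
          have h2 : ((k:ℝ)+1)^2 < ((K:ℝ)+1) * ((K:ℝ)+(n:ℝ)+1) := by
            rw [htdef] at h1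
            have hk2 : (0:ℝ) < ((k:ℝ)+1)^2 := by positivity
            have hKn : (0:ℝ) < ((K:ℝ)+1) * ((K:ℝ)+(n:ℝ)+1) := by positivity
            rw [div_lt_div_iff₀ hKn hk2] at h1
            nlinarith
          have hKk : K ≤ k := by
            by_contra h
            push_neg at h
            rw [hx0 k h] at hk
            simp at hk
            exact absurd (lt_of_le_of_lt ht0.le hk) (by simp)
          -- (k+1)^2 < (K+1)(K+n+1) ≤ (K+n+1)^2 so k+1 < K+n+1
          have h3 : ((k:ℝ)+1)^2 < ((K:ℝ)+(n:ℝ)+1)^2 := by nlinarith [Nat.cast_nonneg (α := ℝ) K, Nat.cast_nonneg (α := ℝ) n]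
          have h4 : (k:ℝ)+1 < (K:ℝ)+(n:ℝ)+1 := by nlinarith [Nat.cast_nonneg (α := ℝ) k]
          have : (k:ℝ) < (K:ℝ) + (n:ℝ) := by linarith
          exact_mod_cast this
      -- the set is contained in [K, K+n), which has n elements... need encard ≤ n
      have : {k : ℕ | t < |x k|} ⊆ ↑(Finset.Ico K (K+n)) := by
        intro k hk
        have := hsub k hk
        simp [this.1, this.2]
      calc {k : ℕ | t < |x k|}.encard ≤ (↑(Finset.Ico K (K+n)) : Set ℕ).encard :=
            Set.encard_mono this
        _ = ((K+n-K : ℕ) : ℕ∞) := by rw [Set.encard_coe_eq_coe_finsetCard, Nat.card_Ico]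
        _ ≤ n := by simp
    refine le_trans hle ?_
    rw [htdef, div_div]
    apply div_le_div_of_nonneg_left hC ?_ ?_
    · positivity
    · nlinarith [Nat.cast_nonneg (α := ℝ) K, Nat.cast_nonneg (α := ℝ) n]

end Stmt9
namespace Stmt9

/-! ### block arithmetic -/

def nk (k : ℕ) : ℕ := Nat.log 2 (k + 1)

lemma nk_le (k : ℕ) : 2 ^ nk k ≤ k + 1 := Nat.pow_log_le_self 2 (Nat.succ_ne_zero k)

lemma nk_lt (k : ℕ) : k + 1 < 2 ^ (nk k + 1) := Nat.lt_pow_succ_log_self (by norm_num) (k+1)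

lemma one_le_two_pow {n : ℕ} : 1 ≤ 2 ^ n := Nat.one_le_two_pow

lemma nk_eval {n i : ℕ} (h : i < 2 ^ n) : nk (2 ^ n - 1 + i) = n := by
  unfold nk
  have h1 : 2 ^ n - 1 + i + 1 = 2 ^ n + i := by
    have := one_le_two_pow (n := n); omega
  rw [h1]
  refine Nat.log_eq_of_pow_le_of_lt_pow (by omega) ?_
  have : 2 ^ (n+1) = 2 ^ n + 2 ^ n := by ring
  omega

def ik (k : ℕ) : ℕ := k + 1 - 2 ^ nk k

lemma ik_lt (k : ℕ) : ik k < 2 ^ nk k := by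
  have h1 := nk_le k
  have h2 := nk_lt k
  have h3 : 2 ^ (nk k + 1) = 2 ^ nk k + 2 ^ nk k := by ring
  unfold ik; omega

lemma pos_eq (k : ℕ) : 2 ^ nk k - 1 + ik k = k := by
  have h1 := nk_le k
  have := one_le_two_pow (n := nk k)
  unfold ik; omega

lemma ik_eval {n i : ℕ} (h : i < 2 ^ n) : ik (2 ^ n - 1 + i) = i := by
  unfold ik
  rw [nk_eval h]
  have := one_le_two_pow (n := n); omega

lemma pow_nk_cast_bound (k : ℕ) : ((k:ℝ) + 1) ≤ 2 * (2 ^ nk k : ℝ) := by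
  have h2 := nk_lt k
  have h3 : 2 ^ (nk k + 1) = 2 * 2 ^ nk k := by ring
  have : (k:ℝ) + 1 < (2 ^ (nk k + 1) : ℕ) := by exact_mod_cast Nat.cast_lt.mpr h2
  rw [h3] at this
  push_cast at this
  linarith

lemma two_pow_pos_real (n : ℕ) : (0:ℝ) < (2:ℝ) ^ n := by positivity

/-- `1 / 2^(nk k) ≤ 2 / (k+1)` -/
lemma inv_pow_nk_le (k : ℕ) : ((1:ℝ) / 2 ^ nk k) ≤ 2 / ((k:ℝ) + 1) := by
  have h1 := pow_nk_cast_bound k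
  rw [div_le_div_iff₀ (by positivity) (by positivity)]
  push_cast at h1 ⊢
  linarith

/-! ### φ-side basic lemmas -/

variable {φ : (ℕ → ℝ) → ℝ} (hlin : IsLinearL1w φ) (hsym : IsSymmetricL1w φ)

lemma memL1w_zero : MemL1w (0 : ℕ → ℝ) := by
  refine memL1w_of_harmonic_bound (C := 0) ?_
  intro k; simp

section
include hlin

lemma phi_zero : φ 0 = 0 := by
  have := hlin.2 0 0 memL1w_zero
  simpa using this

lemma phi_add {x y : ℕ → ℝ} (hx : MemL1w x) (hy : MemL1w y) :
    φ (x + y) = φ x + φ y := hlin.1 x y hx hy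

lemma phi_smul (c : ℝ) {x : ℕ → ℝ} (hx : MemL1w x) : φ (c • x) = c * φ x :=
  hlin.2 c x hx

omit hlin in
lemma memL1w_neg {x : ℕ → ℝ} (hx : MemL1w x) : MemL1w ((-1 : ℝ) • x) := by
  unfold MemL1w at hx ⊢
  rwa [show dRear ((-1:ℝ) • x) = dRear x from dRear_congr_abs (fun k => by simp)]

lemma phi_sub {x y : ℕ → ℝ} (hx : MemL1w x) (hy : MemL1w y) :
    φ (x - y) = φ x - φ y := by
  have h1 : x - y = x + (-1 : ℝ) • y := by funext k; simp; ring
  rw [h1, phi_add hlin hx (memL1w_neg hy), phi_smul hlin (-1) hy]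
  ring

/-- subtraction in pointwise form -/
lemma phi_sub' {x y z : ℕ → ℝ} (h : ∀ k, x k = y k - z k)
    (hy : MemL1w y) (hz : MemL1w z) : φ x = φ y - φ z := by
  have : x = y - z := funext h
  rw [this, phi_sub hlin hy hz]

end

section
include hlin

lemma phi_mono (hpos : IsPositiveL1w φ) {x y : ℕ → ℝ} (hx : MemL1w x)
    (hyx : MemL1w (y - x)) (hle : ∀ k, x k ≤ y k) : φ x ≤ φ y := by
  have h2 : φ y = φ x + φ (y - x) := by
    conv_lhs => rw [show y = x + (y - x) by funext k; simp]
    exact phi_add hlin hx hyx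
  have h3 : 0 ≤ φ (y - x) := hpos _ hyx (fun k => by simp [hle k])
  linarith

end

end Stmt9
namespace Stmt9

def delta (j : ℕ) : ℕ → ℝ := fun k => if k = j then 1 else 0

lemma delta_nonneg (j : ℕ) : (0 : ℕ → ℝ) ≤ delta j := by
  intro k; unfold delta; split <;> norm_num

lemma memL1w_finsupp {v : ℕ → ℝ} {K : ℕ} (hv : ∀ k, K ≤ k → v k = 0) : MemL1w v := by
  refine memL1w_of_harmonic_bound (C := ∑ j ∈ Finset.range K, |v j| * ((j:ℝ)+1)) ?_
  intro k
  rcases lt_or_ge k K with hk | hk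
  · have h1 : |v k| * ((k:ℝ)+1) ≤ ∑ j ∈ Finset.range K, |v j| * ((j:ℝ)+1) :=
      Finset.single_le_sum (f := fun j => |v j| * ((j:ℝ)+1))
        (fun j _ => by positivity) (Finset.mem_range.mpr hk)
    rw [le_div_iff₀ (by positivity)]
    exact h1
  · rw [hv k hk]
    simp
    positivity

lemma memL1w_delta (j : ℕ) : MemL1w (delta j) :=
  memL1w_finsupp (K := j+1) (fun k hk => by unfold delta; split <;> [omega; rfl])

lemma dRear_delta (j : ℕ) : dRear (delta j) = dRear (delta 0) := by
  refine dRear_spread (x := delta 0) (fun m => j + m) (fun a b h => by simpa using h)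
    (fun m => ?_) (fun k hk => ?_)
  · show delta j (j + m) = delta 0 m
    unfold delta
    rcases Nat.eq_zero_or_pos m with rfl | hm
    · simp
    · rw [if_neg (by omega), if_neg (by omega)]
  · show delta j k = 0
    unfold delta
    rw [if_neg]
    intro h
    exact hk ⟨0, by simpa using h.symm⟩

lemma memL1w_har : MemL1w har :=
  memL1w_of_harmonic_bound (C := 1) (fun k => by
    rw [abs_of_nonneg (har_nonneg k)]; exact le_of_eq rfl)

variable {φ : (ℕ → ℝ) → ℝ} (hlin : IsLinearL1w φ) (hsym : IsSymmetricL1w φ)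

section
include hlin hsym

lemma phi_delta_eq (j : ℕ) : φ (delta j) = φ (delta 0) :=
  hsym _ _ (memL1w_delta j) (memL1w_delta 0) (delta_nonneg j) (delta_nonneg 0)
    (dRear_delta j)

lemma phi_truncate (c : ℕ → ℝ) (N : ℕ) :
    φ (fun k => if k < N then c k else 0) = (∑ j ∈ Finset.range N, c j) * φ (delta 0) := by
  induction N with
  | zero => simp; exact phi_zero hlin
  | succ N ih =>
    have hsplit : (fun k => if k < N + 1 then c k else 0)
        = (fun k => if k < N then c k else 0) + (c N) • delta N := by
      funext k
      simp only [Pi.add_apply, Pi.smul_apply, delta, smul_eq_mul]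
      rcases lt_trichotomy k N with h | rfl | h
      · rw [if_pos (by omega), if_pos h, if_neg (by omega)]; ring
      · rw [if_pos (by omega), if_neg (by omega), if_pos rfl]; ring
      · rw [if_neg (by omega), if_neg (by omega), if_neg (by omega)]; ring
    rw [hsplit, phi_add hlin (memL1w_finsupp (K := N) (fun k hk => by simp [Nat.not_lt.mpr hk]))
        ?_, ih, phi_smul hlin _ (memL1w_delta N), phi_delta_eq hlin hsym N,
        Finset.sum_range_succ]
    · ring
    · refine memL1w_finsupp (K := N+1) (fun k hk => ?_)
      unfold delta
      simp only [Pi.smul_apply, smul_eq_mul]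
      rw [if_neg (by omega)]
      ring

end

end Stmt9
namespace Stmt9

variable {φ : (ℕ → ℝ) → ℝ} (hlin : IsLinearL1w φ) (hsym : IsSymmetricL1w φ)

lemma memL1w_dRear {x : ℕ → ℝ} (hx : MemL1w x) : MemL1w (dRear x) := by
  unfold MemL1w at hx ⊢
  rwa [dRear_idem]

lemma phi_dRear (hsym : IsSymmetricL1w φ) {x : ℕ → ℝ} (hx : MemL1w x) (hx0 : 0 ≤ x) :
    φ x = φ (dRear x) :=
  hsym x (dRear x) hx (memL1w_dRear hx) hx0 (fun n => dRear_nonneg x n) (dRear_idem x).symm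

section
include hlin hsym

lemma phi_delta_zero (hpos : IsPositiveL1w φ) : φ (delta 0) = 0 := by
  have hc0 : 0 ≤ φ (delta 0) := hpos _ (memL1w_delta 0) (delta_nonneg 0)
  rcases eq_or_lt_of_le hc0 with h | hc
  · exact h.symm
  · exfalso
    have hbound : ∀ N : ℕ, (∑ j ∈ Finset.range N, har j) * φ (delta 0) ≤ φ har := by
      intro N
      rw [← phi_truncate hlin hsym har N]
      refine phi_mono hlin hpos (memL1w_finsupp (K := N) (fun k hk => by simp [Nat.not_lt.mpr hk]))
        (memL1w_of_harmonic_bound (C := 1) (fun k => ?_)) (fun k => ?_)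
      · simp only [Pi.sub_apply]
        split
        · simp only [sub_self, abs_zero]
          positivity
        · rw [sub_zero, abs_of_nonneg (har_nonneg k)]
          exact le_of_eq (by simp [har])
      · split
        · exact le_rfl
        · exact har_nonneg k
    have hsummable : Summable har := by
      refine summable_of_sum_range_le (c := φ har / φ (delta 0)) (fun n => har_nonneg n) ?_
      intro n
      rw [le_div_iff₀ hc]
      exact hbound n
    have : ¬ Summable har := by
      intro h
      have h2 : Summable (fun n : ℕ => 1 / ((((n+1):ℕ)):ℝ)) :=
        h.congr (fun n => by push_cast [har]; ring)
      exact Real.not_summable_one_div_natCast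
        ((summable_nat_add_iff (f := fun n : ℕ => 1 / ((n:ℕ):ℝ)) 1).mp h2)
    exact this hsummable

lemma phi_finsupp (hpos : IsPositiveL1w φ) {v : ℕ → ℝ} {K : ℕ}
    (hv : ∀ k, K ≤ k → v k = 0) : φ v = 0 := by
  have h1 : v = fun k => if k < K then v k else 0 := by
    funext k
    split
    · rfl
    · exact hv k (by omega)
  rw [h1, phi_truncate hlin hsym v K, phi_delta_zero hlin hsym hpos]
  ring

/-- main "quadratically small" vanishing lemma -/
lemma phi_quad (hpos : IsPositiveL1w φ) {q : ℕ → ℝ} {A : ℝ}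
    (hq : ∀ k, |q k| ≤ A / ((k:ℝ) + 1) ^ 2) : φ q = 0 := by
  have hA : 0 ≤ A := by
    have := le_trans (abs_nonneg (q 0)) (hq 0)
    have h2 : ((0:ℕ):ℝ) + 1 = 1 := by norm_num
    rw [h2] at this
    simpa using this
  -- positive part vanishing
  have key : ∀ p : ℕ → ℝ, (0 ≤ p) → (∀ k, p k ≤ A / ((k:ℝ)+1)^2) → φ p = 0 := by
    intro p hp0 hpA
    have hpabs : ∀ k, |p k| ≤ A / ((k:ℝ)+1)^2 := fun k => by
      rw [abs_of_nonneg (hp0 k)]; exact hpA k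
    have hpharm : ∀ k, |p k| ≤ A / ((k:ℝ)+1) := by
      intro k
      refine le_trans (hpabs k) ?_
      exact div_le_div_of_nonneg_left hA (by positivity) (by nlinarith [Nat.cast_nonneg (α := ℝ) k])
    have hple : 0 ≤ φ p := hpos p (memL1w_of_harmonic_bound hpharm) hp0
    rcases eq_or_lt_of_le hple with h | hppos
    · exact h.symm
    exfalso
    have hbound : ∀ K : ℕ, φ p ≤ A / ((K:ℝ)+1) * φ har := by
      intro K
      set tl : ℕ → ℝ := fun k => if k < K then 0 else p k with htl
      have hsplit : p = (fun k => if k < K then p k else 0) + tl := by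
        funext k; simp only [Pi.add_apply, htl]; split <;> ring
      have htl0 : (0:ℕ → ℝ) ≤ tl := fun k => by
        simp only [htl]; split; exact le_rfl; exact hp0 k
      have htlharm : ∀ k, |tl k| ≤ A / ((k:ℝ)+1) := fun k => by
        simp only [htl]; split
        · simp; positivity
        · exact hpharm k
      have htlmem : MemL1w tl := memL1w_of_harmonic_bound htlharm
      have h1 : φ p = φ tl := by
        rw [hsplit, phi_add hlin (memL1w_finsupp (K := K)
          (fun k hk => by simp [Nat.not_lt.mpr hk])) htlmem,
          phi_finsupp hlin hsym hpos (K := K) (fun k hk => by simp [Nat.not_lt.mpr hk])]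
        ring
      have h2 : φ tl = φ (dRear tl) := phi_dRear hsym htlmem htl0
      have h3 : ∀ n, dRear tl n ≤ A / ((K:ℝ)+1) / ((n:ℝ)+1) := by
        refine dRear_quad_tail hA (fun k => ?_) (fun k hk => by simp [htl, hk])
        simp only [htl]; split
        · simp; positivity
        · exact hpabs k
      have h4 : φ (dRear tl) ≤ A / ((K:ℝ)+1) * φ har := by
        have := phi_smul hlin (A / ((K:ℝ)+1)) memL1w_har
        rw [← this]
        refine phi_mono hlin hpos (memL1w_dRear htlmem)
          (memL1w_of_harmonic_bound (C := A/((K:ℝ)+1) + A) (fun k => ?_)) (fun k => ?_)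
        · simp only [Pi.sub_apply, Pi.smul_apply, smul_eq_mul, har]
          have hb1 : |dRear tl k| ≤ A/((k:ℝ)+1) := by
            rw [abs_of_nonneg (dRear_nonneg tl k)]
            refine le_trans (h3 k) ?_
            rw [div_div]
            exact div_le_div_of_nonneg_left hA (by positivity)
              (by nlinarith [Nat.cast_nonneg (α := ℝ) K, Nat.cast_nonneg (α := ℝ) k])
          have hb2 : |A / ((K:ℝ)+1) * (1/((k:ℝ)+1))| = A/((K:ℝ)+1) /((k:ℝ)+1) := by
            rw [abs_of_nonneg (by positivity)]; ring
          calc |A / (↑K + 1) * (1 / (↑k + 1)) - dRear tl k|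
              ≤ |A / (↑K + 1) * (1 / (↑k + 1))| + |dRear tl k| := abs_sub _ _
            _ ≤ A/((K:ℝ)+1)/((k:ℝ)+1) + A/((k:ℝ)+1) := by
                rw [hb2]; exact add_le_add le_rfl hb1
            _ ≤ (A/((K:ℝ)+1) + A)/((k:ℝ)+1) := by rw [add_div]
        · simp only [Pi.smul_apply, smul_eq_mul, har]
          calc dRear tl k ≤ A / ((K:ℝ)+1) / ((k:ℝ)+1) := h3 k
            _ = A / ((K:ℝ)+1) * (1/((k:ℝ)+1)) := by ring
      rw [h1, h2]; exact h4
    -- choose K with A/(K+1) * φ har < φ p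
    obtain ⟨K, hK⟩ := exists_nat_gt (A * φ har / φ p)
    have h5 := hbound K
    have hφh : 0 ≤ φ har := hpos har memL1w_har (fun k => har_nonneg k)
    have h6 : A * φ har / φ p < (K:ℝ) + 1 := lt_trans hK (by linarith)
    rw [div_lt_iff₀ hppos] at h6
    have h7 : A / ((K:ℝ)+1) * φ har < φ p := by
      rw [div_mul_eq_mul_div, div_lt_iff₀ (by positivity)]
      linarith [mul_comm (φ p) ((K:ℝ)+1)]
    linarith
  -- split q
  set qp : ℕ → ℝ := fun k => max (q k) 0 with hqp
  set qm : ℕ → ℝ := fun k => max (-(q k)) 0 with hqm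
  have hq_eq : ∀ k, q k = qp k - qm k := by
    intro k
    simp only [hqp, hqm]
    rcases le_total (q k) 0 with h | h
    · rw [max_eq_right h, max_eq_left (by linarith)]; ring
    · rw [max_eq_left h, max_eq_right (by linarith)]; ring
  have hqp0 : (0:ℕ→ℝ) ≤ qp := fun k => le_max_right _ _
  have hqm0 : (0:ℕ→ℝ) ≤ qm := fun k => le_max_right _ _
  have hqpA : ∀ k, qp k ≤ A / ((k:ℝ)+1)^2 := fun k =>
    max_le (le_trans (le_abs_self _) (hq k)) (by positivity)
  have hqmA : ∀ k, qm k ≤ A / ((k:ℝ)+1)^2 := fun k =>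
    max_le (le_trans (neg_le_abs _) (hq k)) (by positivity)
  have hmemp : MemL1w qp := memL1w_of_harmonic_bound (C := A) (fun k => by
    rw [abs_of_nonneg (hqp0 k)]
    refine le_trans (hqpA k) ?_
    exact div_le_div_of_nonneg_left hA (by positivity) (by nlinarith [Nat.cast_nonneg (α := ℝ) k]))
  have hmemm : MemL1w qm := memL1w_of_harmonic_bound (C := A) (fun k => by
    rw [abs_of_nonneg (hqm0 k)]
    refine le_trans (hqmA k) ?_
    exact div_le_div_of_nonneg_left hA (by positivity) (by nlinarith [Nat.cast_nonneg (α := ℝ) k]))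
  rw [phi_sub' hlin hq_eq hmemp hmemm, key qp hqp0 hqpA, key qm hqm0 hqmA]
  ring

end

end Stmt9
namespace Stmt9

lemma steinitz (n : ℕ) : ∀ (s : Finset ℕ) (d : ℕ → ℝ) (M p : ℝ), s.card = n → |p| ≤ M →
    (∀ i ∈ s, |d i| ≤ M) → p + ∑ i ∈ s, d i = 0 →
    ∃ e : ℕ → ℕ, (∀ t, t < s.card → e t ∈ s) ∧
      (∀ t t', t < s.card → t' < s.card → e t = e t' → t = t') ∧
      (∀ i ∈ s, ∃ t, t < s.card ∧ e t = i) ∧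
      (∀ j, j ≤ s.card → |p + ∑ t ∈ Finset.range j, d (e t)| ≤ M) := by
  induction n with
  | zero =>
    intro s d M p hcard hp hd hsum
    refine ⟨id, ?_, ?_, ?_, ?_⟩
    · intro t ht; omega
    · intro t t' ht; omega
    · intro i hi
      exact absurd hi (by rw [Finset.card_eq_zero.mp hcard]; simp)
    · intro j hj
      rw [hcard] at hj
      interval_cases j
      simpa using hp
  | succ n ih =>
    intro s d M p hcard hp hd hsum
    have hne : s.Nonempty := Finset.card_pos.mp (by omega)
    have hex : ∃ a ∈ s, (p ≤ 0 → 0 ≤ d a) ∧ (0 < p → d a ≤ 0) := by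
      rcases le_or_gt p 0 with hple | hpgt
      · have h1 : ∃ a ∈ s, 0 ≤ d a := by
          by_contra hcon
          push_neg at hcon
          have := Finset.sum_neg hcon hne
          linarith
        obtain ⟨a, has, ha⟩ := h1
        exact ⟨a, has, fun _ => ha, fun h => absurd h (not_lt.mpr hple)⟩
      · have h1 : ∃ a ∈ s, d a ≤ 0 := by
          by_contra hcon
          push_neg at hcon
          have := Finset.sum_pos hcon hne
          linarith
        obtain ⟨a, has, ha⟩ := h1
        exact ⟨a, has, fun h => absurd hpgt (not_lt.mpr h), fun _ => ha⟩
    obtain ⟨a, has, hsign⟩ := hex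
    set s' := s.erase a with hs'
    have hcard' : s'.card = n := by
      rw [hs', Finset.card_erase_of_mem has]; omega
    have hp' : |p + d a| ≤ M := by
      rw [abs_le] at hp ⊢
      have hda := hd a has
      rw [abs_le] at hda
      rcases le_or_gt p 0 with h | h
      · have := hsign.1 h
        constructor <;> linarith
      · have := hsign.2 h
        constructor <;> linarith
    have hsum' : (p + d a) + ∑ i ∈ s', d i = 0 := by
      rw [hs']
      have := Finset.add_sum_erase s d has
      linarith
    obtain ⟨e', he1, he2, he3, he4⟩ := ih s' d M (p + d a) hcard' hp'
      (fun i hi => hd i (Finset.mem_of_mem_erase hi)) hsum'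
    rw [hcard'] at he1 he2 he3 he4
    refine ⟨fun t => if t = 0 then a else e' (t - 1), ?_, ?_, ?_, ?_⟩ <;> rw [hcard] <;> (try dsimp only)
    · intro t ht
      split
      · exact has
      · exact Finset.mem_of_mem_erase (he1 (t-1) (by omega))
    · intro t t' ht ht' heq
      try dsimp only at heq
      rcases Nat.eq_zero_or_pos t with rfl | h1 <;> rcases Nat.eq_zero_or_pos t' with rfl | h2
      · rfl
      · rw [if_pos rfl, if_neg (by omega)] at heq
        exact absurd heq.symm (Finset.ne_of_mem_erase (he1 (t'-1) (by omega)))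
      · rw [if_pos rfl, if_neg (by omega)] at heq
        exact absurd heq (Finset.ne_of_mem_erase (he1 (t-1) (by omega)))
      · rw [if_neg (by omega), if_neg (by omega)] at heq
        have := he2 (t-1) (t'-1) (by omega) (by omega) heq
        omega
    · intro i hi
      rcases eq_or_ne i a with rfl | hia
      · exact ⟨0, by omega, by simp⟩
      · obtain ⟨t, ht, het⟩ := he3 i (Finset.mem_erase.mpr ⟨hia, hi⟩)
        refine ⟨t + 1, by omega, ?_⟩
        try dsimp only
        rw [if_neg (Nat.succ_ne_zero t), Nat.add_sub_cancel]
        exact het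
    · intro j hj
      rcases Nat.eq_zero_or_pos j with rfl | hjpos
      · simpa using hp
      · obtain ⟨j', rfl⟩ := Nat.exists_eq_succ_of_ne_zero (by omega : j ≠ 0)
        rw [Finset.sum_range_succ']
        have hterm : ∀ t : ℕ, (if t + 1 = 0 then a else e' (t + 1 - 1)) = e' t := fun t => by
          rw [if_neg (Nat.succ_ne_zero t), Nat.add_sub_cancel]
        rw [Finset.sum_congr rfl (fun t _ => by rw [hterm t]), if_pos rfl]
        have := he4 j' (by omega)
        rw [abs_le] at this ⊢
        constructor <;> linarith

end Stmt9
namespace Stmt9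

variable {φ : (ℕ → ℝ) → ℝ}

/-- The key averaging lemma: a nonnegative decreasing sequence in `l_{1,∞}` has the
same `φ`-value as its sequence of dyadic block averages. -/
lemma phi_blockavg (hlin : IsLinearL1w φ) (hsym : IsSymmetricL1w φ)
    {z : ℕ → ℝ} {C : ℝ} (hz : Antitone z) (hz0 : ∀ k, 0 ≤ z k)
    (hC : ∀ k, z k ≤ C / ((k:ℝ) + 1)) :
    φ z = φ (fun k => (∑ i ∈ Finset.range (2 ^ nk k), z (2 ^ nk k - 1 + i)) / (2:ℝ) ^ nk k) := by
  have hC0 : 0 ≤ C := le_trans (hz0 0) (by simpa using hC 0)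
  set m : ℕ → ℝ := fun n => (∑ i ∈ Finset.range (2 ^ n), z (2 ^ n - 1 + i)) / (2:ℝ) ^ n with hm
  set w : ℕ → ℝ := fun k => m (nk k) with hw
  set d : ℕ → ℝ := fun k => z k - w k with hd
  set zb : ℕ → ℝ := fun n => z (2 ^ n - 1) with hzb
  -- basic bounds
  have hzb0 : ∀ n, 0 ≤ zb n := fun n => hz0 _
  have hblock_le : ∀ n i, i < 2 ^ n → z (2 ^ n - 1 + i) ≤ zb n := by
    intro n i hi
    exact hz (Nat.le_add_right _ _)
  have hzbC : ∀ n, zb n ≤ C / (2:ℝ) ^ n := by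
    intro n
    have h1 := hC (2 ^ n - 1)
    have h2 : ((2 ^ n - 1 : ℕ) : ℝ) + 1 = (2:ℝ) ^ n := by
      have := one_le_two_pow (n := n)
      push_cast [Nat.cast_sub this]
      ring
    rwa [h2] at h1
  have hm0 : ∀ n, 0 ≤ m n := by
    intro n
    apply div_nonneg ?_ (by positivity)
    exact Finset.sum_nonneg (fun i _ => hz0 _)
  have hmle : ∀ n, m n ≤ zb n := by
    intro n
    rw [hm]
    rw [div_le_iff₀ (by positivity)]
    calc ∑ i ∈ Finset.range (2 ^ n), z (2 ^ n - 1 + i)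
        ≤ ∑ _i ∈ Finset.range (2 ^ n), zb n :=
          Finset.sum_le_sum (fun i hi => hblock_le n i (Finset.mem_range.mp hi))
      _ = (2 ^ n : ℕ) * zb n := by rw [Finset.sum_const, Finset.card_range]; simp
      _ = zb n * (2:ℝ) ^ n := by push_cast; ring
  -- w and d basic facts
  have hw_eval : ∀ n i, i < 2 ^ n → w (2 ^ n - 1 + i) = m n := by
    intro n i hi
    rw [hw]
    simp only
    rw [nk_eval hi]
  have hdsum : ∀ n, ∑ i ∈ Finset.range (2 ^ n), d (2 ^ n - 1 + i) = 0 := by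
    intro n
    have : ∀ i ∈ Finset.range (2 ^ n), d (2 ^ n - 1 + i) = z (2 ^ n - 1 + i) - m n := by
      intro i hi
      rw [hd]
      simp only
      rw [hw_eval n i (Finset.mem_range.mp hi)]
    rw [Finset.sum_congr rfl this, Finset.sum_sub_distrib, Finset.sum_const, Finset.card_range,
      hm]
    have h2 : ((2:ℝ)) ^ n ≠ 0 := by positivity
    rw [nsmul_eq_mul]; push_cast
    field_simp
    ring
  have hdabs : ∀ n i, i < 2 ^ n → |d (2 ^ n - 1 + i)| ≤ zb n := by
    intro n i hi
    rw [hd]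
    simp only
    rw [hw_eval n i hi, abs_le]
    constructor
    · have := hblock_le n i hi
      have := hmle n
      have := hz0 (2 ^ n - 1 + i)
      nlinarith [hzb0 n, hm0 n]
    · have := hblock_le n i hi
      have := hm0 n
      linarith
  -- Steinitz data per block
  have hSt : ∀ n : ℕ, ∃ e : ℕ → ℕ,
      (∀ t, t < 2 ^ n → e t < 2 ^ n) ∧
      (∀ t t', t < 2 ^ n → t' < 2 ^ n → e t = e t' → t = t') ∧
      (∀ i, i < 2 ^ n → ∃ t, t < 2 ^ n ∧ e t = i) ∧
      (∀ j, j ≤ 2 ^ n → |∑ t ∈ Finset.range j, d (2 ^ n - 1 + e t)| ≤ zb n) := by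
    intro n
    obtain ⟨e, h1, h2, h3, h4⟩ := steinitz (2 ^ n) (Finset.range (2 ^ n))
      (fun i => d (2 ^ n - 1 + i)) (zb n) 0 (Finset.card_range _)
      (by simpa using hzb0 n)
      (fun i hi => hdabs n i (Finset.mem_range.mp hi))
      (by rw [zero_add]; exact hdsum n)
    rw [Finset.card_range] at h1 h2 h3 h4
    refine ⟨e, ?_, h2, ?_, ?_⟩
    · intro t ht; exact Finset.mem_range.mp (h1 t ht)
    · intro i hi
      obtain ⟨t, ht, het⟩ := h3 i (Finset.mem_range.mpr hi)
      exact ⟨t, ht, het⟩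
    · intro j hj
      have := h4 j hj
      simpa using this
  choose e he1 he2 he3 he4 using hSt
  -- inverse functions
  have hFex : ∀ n i, ∃ t, i < 2 ^ n → (t < 2 ^ n ∧ e n t = i) := by
    intro n i
    by_cases h : i < 2 ^ n
    · obtain ⟨t, ht⟩ := he3 n i h
      exact ⟨t, fun _ => ht⟩
    · exact ⟨0, fun h' => absurd h' h⟩
  choose f hf using hFex
  have hfe : ∀ n t, t < 2 ^ n → f n (e n t) = t := by
    intro n t ht
    have h1 := hf n (e n t) (he1 n t ht)
    exact he2 n _ _ h1.1 ht h1.2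
  -- prefix sums
  set P : ℕ → ℕ → ℝ := fun n j => ∑ t ∈ Finset.range j, d (2 ^ n - 1 + e n t) with hP
  have hPbound : ∀ n j, j ≤ 2 ^ n → |P n j| ≤ zb n := fun n j hj => he4 n j hj
  have hPfull : ∀ n, P n (2 ^ n) = 0 := by
    intro n
    rw [hP]
    simp only
    have hre : ∑ t ∈ Finset.range (2 ^ n), d (2 ^ n - 1 + e n t)
        = ∑ i ∈ Finset.range (2 ^ n), d (2 ^ n - 1 + i) :=
      Finset.sum_nbij' (i := e n) (j := f n)
        (fun t ht => Finset.mem_range.mpr (he1 n t (Finset.mem_range.mp ht)))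
        (fun i hi => Finset.mem_range.mpr (hf n i (Finset.mem_range.mp hi)).1)
        (fun t ht => hfe n t (Finset.mem_range.mp ht))
        (fun i hi => (hf n i (Finset.mem_range.mp hi)).2)
        (fun t ht => rfl)
    rw [hre]
    exact hdsum n
  -- the sequence u and the cyclic permutation Sg
  set J : ℕ → ℕ := fun k => f (nk k) (ik k) with hJ
  have hJlt : ∀ k, J k < 2 ^ nk k := fun k => (hf (nk k) (ik k) (ik_lt k)).1
  have heJ : ∀ k, e (nk k) (J k) = ik k := fun k => (hf (nk k) (ik k) (ik_lt k)).2
  set u : ℕ → ℝ := fun k => zb (nk k) - P (nk k) (J k) with hu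
  set nxt : ℕ → ℕ → ℕ := fun n t => if t + 1 < 2 ^ n then t + 1 else 0 with hnxt
  set prv : ℕ → ℕ → ℕ := fun n t => if t = 0 then 2 ^ n - 1 else t - 1 with hprv
  have hnxt_lt : ∀ n t, t < 2 ^ n → nxt n t < 2 ^ n := by
    intro n t ht
    rw [hnxt]
    simp only
    split
    · assumption
    · have := one_le_two_pow (n := n); omega
  have hprv_lt : ∀ n t, t < 2 ^ n → prv n t < 2 ^ n := by
    intro n t ht
    rw [hprv]
    have := one_le_two_pow (n := n)
    simp only
    split <;> omega
  have hprv_nxt : ∀ n t, t < 2 ^ n → prv n (nxt n t) = t := by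
    intro n t ht
    rw [hnxt, hprv]
    have := one_le_two_pow (n := n)
    simp only
    split <;> split <;> omega
  have hnxt_prv : ∀ n t, t < 2 ^ n → nxt n (prv n t) = t := by
    intro n t ht
    rw [hnxt, hprv]
    have := one_le_two_pow (n := n)
    simp only
    split <;> split <;> omega
  set Sg : ℕ → ℕ := fun k => 2 ^ nk k - 1 + e (nk k) (nxt (nk k) (J k)) with hSg
  set Sg' : ℕ → ℕ := fun k => 2 ^ nk k - 1 + e (nk k) (prv (nk k) (J k)) with hSg'
  have hSg_nk : ∀ k, nk (Sg k) = nk k ∧ ik (Sg k) = e (nk k) (nxt (nk k) (J k)) := by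
    intro k
    have h1 : e (nk k) (nxt (nk k) (J k)) < 2 ^ nk k :=
      he1 _ _ (hnxt_lt _ _ (hJlt k))
    exact ⟨nk_eval h1, ik_eval h1⟩
  have hSg'_nk : ∀ k, nk (Sg' k) = nk k ∧ ik (Sg' k) = e (nk k) (prv (nk k) (J k)) := by
    intro k
    have h1 : e (nk k) (prv (nk k) (J k)) < 2 ^ nk k :=
      he1 _ _ (hprv_lt _ _ (hJlt k))
    exact ⟨nk_eval h1, ik_eval h1⟩
  have hJSg : ∀ k, J (Sg k) = nxt (nk k) (J k) := by
    intro k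
    rw [hJ]
    simp only
    rw [(hSg_nk k).1, (hSg_nk k).2]
    exact hfe _ _ (hnxt_lt _ _ (hJlt k))
  have hJSg' : ∀ k, J (Sg' k) = prv (nk k) (J k) := by
    intro k
    rw [hJ]
    simp only
    rw [(hSg'_nk k).1, (hSg'_nk k).2]
    exact hfe _ _ (hprv_lt _ _ (hJlt k))
  have hSg_bij : Function.Bijective Sg := by
    rw [Function.bijective_iff_has_inverse]
    refine ⟨Sg', ?_, ?_⟩
    · intro k
      rw [hSg']
      simp only
      rw [(hSg_nk k).1, hJSg k, hprv_nxt _ _ (hJlt k), heJ k]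
      exact pos_eq k
    · intro k
      rw [hSg]
      simp only
      rw [(hSg'_nk k).1, hJSg' k, hnxt_prv _ _ (hJlt k), heJ k]
      exact pos_eq k
  -- the key pointwise identity
  have hkey : ∀ k, z k = w k + u k - u (Sg k) := by
    intro k
    have hn := (hSg_nk k).1
    have hu1 : u k = zb (nk k) - P (nk k) (J k) := rfl
    have hu2 : u (Sg k) = zb (nk k) - P (nk k) (nxt (nk k) (J k)) := by
      rw [hu]
      simp only
      rw [hn, hJSg k]
    have hdk : d k = z k - w k := rfl
    rcases lt_or_ge (J k + 1) (2 ^ nk k) with hlt | hge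
    · have hnx : nxt (nk k) (J k) = J k + 1 := by rw [hnxt]; simp only; rw [if_pos hlt]
      rw [hu1, hu2, hnx]
      have : P (nk k) (J k + 1) = P (nk k) (J k) + d (2 ^ nk k - 1 + e (nk k) (J k)) := by
        rw [hP]; simp only; rw [Finset.sum_range_succ]
      rw [this, heJ k, pos_eq k, hdk]
      ring
    · have hJeq : J k + 1 = 2 ^ nk k := by
        have := hJlt k; omega
      have hnx : nxt (nk k) (J k) = 0 := by
        rw [hnxt]; simp only; rw [if_neg (by omega)]
      have hP0 : P (nk k) 0 = 0 := by rw [hP]; simp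
      have hPL : P (nk k) (2 ^ nk k) = 0 := hPfull (nk k)
      have hstep : P (nk k) (J k + 1) = P (nk k) (J k) + d (2 ^ nk k - 1 + e (nk k) (J k)) := by
        rw [hP]; simp only; rw [Finset.sum_range_succ]
      rw [hJeq] at hstep
      rw [hu1, hu2, hnx, hP0]
      rw [heJ k, pos_eq k, hdk] at hstep
      rw [hPL] at hstep
      linarith
  -- bounds for u, w
  have hu0 : ∀ k, 0 ≤ u k := by
    intro k
    have := hPbound (nk k) (J k) (le_of_lt (hJlt k))
    rw [hu]
    simp only
    rw [abs_le] at this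
    linarith [this.2]
  have huB : ∀ k, u k ≤ 2 * zb (nk k) := by
    intro k
    have := hPbound (nk k) (J k) (le_of_lt (hJlt k))
    rw [hu]
    simp only
    rw [abs_le] at this
    linarith [this.1]
  have hzbk : ∀ k, zb (nk k) ≤ 2 * C / ((k:ℝ) + 1) := by
    intro k
    refine le_trans (hzbC (nk k)) ?_
    have h1 := inv_pow_nk_le k
    calc C / (2:ℝ) ^ nk k = C * (1 / (2:ℝ) ^ nk k) := by ring
      _ ≤ C * (2 / ((k:ℝ)+1)) := by
          exact mul_le_mul_of_nonneg_left h1 hC0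
      _ = 2 * C / ((k:ℝ)+1) := by ring
  have huH : ∀ k, |u k| ≤ 4 * C / ((k:ℝ) + 1) := by
    intro k
    rw [abs_of_nonneg (hu0 k)]
    calc u k ≤ 2 * zb (nk k) := huB k
      _ ≤ 2 * (2 * C / ((k:ℝ)+1)) := by linarith [hzbk k]
      _ = 4 * C / ((k:ℝ)+1) := by ring
  have humem : MemL1w u := memL1w_of_harmonic_bound huH
  have hwH : ∀ k, |w k| ≤ 2 * C / ((k:ℝ) + 1) := by
    intro k
    rw [hw]
    simp only
    rw [abs_of_nonneg (hm0 (nk k))]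
    exact le_trans (hmle (nk k)) (hzbk k)
  have hwmem : MemL1w w := memL1w_of_harmonic_bound hwH
  have husg_mem : MemL1w (fun k => u (Sg k)) := by
    unfold MemL1w
    rw [dRear_comp_bijective hSg_bij]
    exact humem
  have hwu_mem : MemL1w (w + u) := by
    refine memL1w_of_harmonic_bound (C := 6 * C) (fun k => ?_)
    calc |(w + u) k| ≤ |w k| + |u k| := abs_add_le _ _
      _ ≤ 2 * C / ((k:ℝ)+1) + 4 * C / ((k:ℝ)+1) := add_le_add (hwH k) (huH k)
      _ = 6 * C / ((k:ℝ)+1) := by ring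
  have step1 : φ z = φ (w + u) - φ (fun k => u (Sg k)) := by
    refine phi_sub' hlin (fun k => ?_) hwu_mem husg_mem
    rw [Pi.add_apply]
    linarith [hkey k]
  have step2 : φ (w + u) = φ w + φ u := phi_add hlin hwmem humem
  have step3 : φ (fun k => u (Sg k)) = φ u := by
    refine hsym _ _ husg_mem humem (fun k => hu0 (Sg k)) (fun k => hu0 k)
      (dRear_comp_bijective hSg_bij)
  rw [step1, step2, step3]
  ring

end Stmt9
namespace Stmt9

lemma log2_pos : (0:ℝ) < Real.log 2 := Real.log_pos (by norm_num)

lemma Dop_eval (x : ℕ → ℝ) (k : ℕ) :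
    Dop x k = Real.log 2 * x (nk k) / (2:ℝ) ^ nk k := rfl

lemma Dop_harmonic_bound {x : ℕ → ℝ} {M : ℝ} (hx : ∀ n, |x n| ≤ M) :
    ∀ k, |Dop x k| ≤ (2 * Real.log 2 * M) / ((k:ℝ) + 1) := by
  intro k
  have hM : 0 ≤ M := le_trans (abs_nonneg _) (hx 0)
  rw [Dop_eval, abs_div, abs_mul]
  have h2 : |(2:ℝ) ^ nk k| = (2:ℝ) ^ nk k := abs_of_pos (by positivity)
  rw [h2, abs_of_pos log2_pos, div_le_div_iff₀ (by positivity) (by positivity)]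
  have h3 := inv_pow_nk_le k
  rw [div_le_div_iff₀ (by positivity) (by positivity)] at h3
  have h4 : |x (nk k)| ≤ M := hx _
  have ha : Real.log 2 * |x (nk k)| ≤ Real.log 2 * M :=
    mul_le_mul_of_nonneg_left h4 log2_pos.le
  have hb : (k:ℝ) + 1 ≤ 2 * 2 ^ nk k := by linarith
  nlinarith [mul_le_mul ha hb (by positivity) (mul_nonneg log2_pos.le hM)]

lemma memL1w_Dop {x : ℕ → ℝ} {M : ℝ} (hx : ∀ n, |x n| ≤ M) : MemL1w (Dop x) :=
  memL1w_of_harmonic_bound (Dop_harmonic_bound hx)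

lemma Dop_nonneg {x : ℕ → ℝ} (hx : 0 ≤ x) : (0 : ℕ → ℝ) ≤ Dop x := by
  intro k
  rw [Dop_eval]
  have := hx (nk k)
  exact div_nonneg (mul_nonneg log2_pos.le this) (by positivity)

/-! ### the estimate for the block averages of the harmonic sequence -/

lemma har_block_cast (n i : ℕ) : har (2 ^ n - 1 + i) = 1 / ((2:ℝ) ^ n + i) := by
  unfold har
  congr 1
  have h := one_le_two_pow (n := n)
  push_cast [Nat.cast_sub h]
  ring

/-- block sums of the harmonic sequence -/
noncomputable def harS (n : ℕ) : ℝ := ∑ i ∈ Finset.range (2 ^ n), 1 / ((2:ℝ) ^ n + i)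

lemma harS_eq (n : ℕ) : ∑ i ∈ Finset.range (2 ^ n), har (2 ^ n - 1 + i) = harS n :=
  Finset.sum_congr rfl (fun i _ => har_block_cast n i)

noncomputable def Flog (n i : ℕ) : ℝ := Real.log ((2:ℝ) ^ n + i)

noncomputable def Ginv (n i : ℕ) : ℝ := -(1 / ((2:ℝ) ^ n + i))

lemma log_telescope (n : ℕ) :
    ∑ i ∈ Finset.range (2 ^ n), (Flog n (i+1) - Flog n i) = Real.log 2 := by
  rw [Finset.sum_range_sub (f := Flog n)]
  unfold Flog
  have h2 : ((2 ^ n : ℕ) : ℝ) = (2:ℝ) ^ n := by push_cast; ring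
  rw [h2]
  push_cast
  rw [show (2:ℝ) ^ n + (2:ℝ) ^ n = 2 * (2:ℝ) ^ n by ring,
    Real.log_mul (by norm_num) (by positivity)]
  simp

lemma ginv_telescope (n : ℕ) :
    ∑ i ∈ Finset.range (2 ^ n), (Ginv n (i+1) - Ginv n i) = 1 / (2:ℝ) ^ (n+1) := by
  rw [Finset.sum_range_sub (f := Ginv n)]
  unfold Ginv
  have h2 : ((2 ^ n : ℕ) : ℝ) = (2:ℝ) ^ n := by push_cast; ring
  rw [h2]
  push_cast
  rw [show (2:ℝ) ^ (n+1) = 2 * (2:ℝ) ^ n by ring]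
  have h3 : (2:ℝ) ^ n ≠ 0 := by positivity
  field_simp
  ring

lemma log_diff_bounds {x : ℝ} (hx : 0 < x) :
    1 / (x + 1) ≤ Real.log (x + 1) - Real.log x ∧ Real.log (x + 1) - Real.log x ≤ 1 / x := by
  have hx1 : (0:ℝ) < x + 1 := by linarith
  constructor
  · have h1 := Real.log_le_sub_one_of_pos (x := x / (x + 1)) (by positivity)
    rw [Real.log_div (by positivity) (by positivity)] at h1
    have h2 : x / (x+1) - 1 = -(1/(x+1)) := by field_simp; ring
    rw [h2] at h1
    linarith
  · have h1 := Real.log_le_sub_one_of_pos (x := (x+1) / x) (by positivity)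
    rw [Real.log_div (by positivity) (by positivity)] at h1
    have h2 : (x+1) / x - 1 = 1/x := by field_simp; ring
    rw [h2] at h1
    linarith

lemma flog_diff_bounds (n i : ℕ) :
    1 / ((2:ℝ) ^ n + i + 1) ≤ Flog n (i+1) - Flog n i ∧
      Flog n (i+1) - Flog n i ≤ 1 / ((2:ℝ) ^ n + i) := by
  have hx : (0:ℝ) < (2:ℝ) ^ n + i := by positivity
  have h := log_diff_bounds hx
  unfold Flog
  have h2 : ((i+1 : ℕ) : ℝ) = (i:ℝ) + 1 := by push_cast; ring
  rw [h2, show (2:ℝ) ^ n + ((i:ℝ) + 1) = ((2:ℝ) ^ n + i) + 1 by ring]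
  exact h

lemma harS_bounds (n : ℕ) : Real.log 2 ≤ harS n ∧ harS n ≤ Real.log 2 + 1 / (2:ℝ) ^ (n+1) := by
  constructor
  · rw [← log_telescope n]
    unfold harS
    exact Finset.sum_le_sum (fun i _ => (flog_diff_bounds n i).2)
  · have hterm : ∀ i ∈ Finset.range (2 ^ n),
        1 / ((2:ℝ) ^ n + i) ≤ (Ginv n (i+1) - Ginv n i) + (Flog n (i+1) - Flog n i) := by
      intro i _
      have h1 := (flog_diff_bounds n i).1
      have h2 : Ginv n (i+1) - Ginv n i = 1 / ((2:ℝ)^n + i) - 1 / ((2:ℝ)^n + i + 1) := by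
        unfold Ginv
        have h3 : ((i+1 : ℕ) : ℝ) = (i:ℝ) + 1 := by push_cast; ring
        rw [h3]
        ring_nf
      rw [h2]
      linarith
    calc harS n ≤ ∑ i ∈ Finset.range (2 ^ n),
          ((Ginv n (i+1) - Ginv n i) + (Flog n (i+1) - Flog n i)) :=
          Finset.sum_le_sum hterm
      _ = (∑ i ∈ Finset.range (2 ^ n), (Ginv n (i+1) - Ginv n i))
          + ∑ i ∈ Finset.range (2 ^ n), (Flog n (i+1) - Flog n i) := Finset.sum_add_distrib
      _ = 1 / (2:ℝ) ^ (n+1) + Real.log 2 := by rw [ginv_telescope, log_telescope]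
      _ = Real.log 2 + 1 / (2:ℝ) ^ (n+1) := by ring

end Stmt9
namespace Stmt9

noncomputable def ghat : ℕ → ℝ := fun k =>
  (∑ i ∈ Finset.range (2 ^ nk k), har (2 ^ nk k - 1 + i)) / (2:ℝ) ^ nk k

lemma ghat_eval (k : ℕ) : ghat k = harS (nk k) / (2:ℝ) ^ nk k := by
  unfold ghat
  rw [harS_eq]

lemma Dop_one_eval (k : ℕ) : Dop (fun _ => (1:ℝ)) k = Real.log 2 / (2:ℝ) ^ nk k := by
  rw [Dop_eval]
  ring

lemma ghat_quad (k : ℕ) : |ghat k - Dop (fun _ => (1:ℝ)) k| ≤ 2 / ((k:ℝ) + 1) ^ 2 := by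
  rw [ghat_eval, Dop_one_eval, div_sub_div_same, abs_div,
    abs_of_pos (two_pow_pos_real (nk k))]
  have h1 := (harS_bounds (nk k)).1
  have h2 := (harS_bounds (nk k)).2
  have h3 : |harS (nk k) - Real.log 2| ≤ 1 / (2:ℝ) ^ (nk k + 1) := by
    rw [abs_le]
    constructor
    · have : (0:ℝ) < 1 / (2:ℝ) ^ (nk k + 1) := by positivity
      linarith
    · linarith
  have h4 := pow_nk_cast_bound k
  have h5 : (0:ℝ) < (2:ℝ) ^ nk k := two_pow_pos_real _
  have h6 : ((k:ℝ)+1)^2 ≤ 4 * ((2:ℝ) ^ nk k)^2 := by nlinarith [Nat.cast_nonneg (α := ℝ) k]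
  calc |harS (nk k) - Real.log 2| / (2:ℝ) ^ nk k
      ≤ (1 / (2:ℝ) ^ (nk k + 1)) / (2:ℝ) ^ nk k := by
        exact div_le_div_of_nonneg_right h3 h5.le
    _ = 1 / (2 * ((2:ℝ) ^ nk k)^2) := by
        rw [pow_succ]
        field_simp
    _ ≤ 2 / ((k:ℝ)+1)^2 := by
        rw [div_le_div_iff₀ (by positivity) (by positivity)]
        nlinarith
  
lemma ghat_harmonic_bound (k : ℕ) : |ghat k| ≤ (2 * Real.log 2 + 2) / ((k:ℝ) + 1) := by
  rw [ghat_eval]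
  have h2 := (harS_bounds (nk k)).2
  have h1 := (harS_bounds (nk k)).1
  have h5 : (0:ℝ) < (2:ℝ) ^ nk k := two_pow_pos_real _
  have h0 : 0 ≤ harS (nk k) := le_trans log2_pos.le h1
  rw [abs_div, abs_of_nonneg h0, abs_of_pos h5]
  have h6 : harS (nk k) ≤ Real.log 2 + 1 := by
    have : 1 / (2:ℝ) ^ (nk k + 1) ≤ 1 := by
      rw [div_le_one (by positivity)]
      have : (1:ℝ) ≤ (2:ℝ) ^ (nk k+1) := one_le_pow₀ (by norm_num)
      linarith
    linarith
  have h7 := inv_pow_nk_le k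
  calc harS (nk k) / (2:ℝ) ^ nk k ≤ (Real.log 2 + 1) / (2:ℝ) ^ nk k := by
        exact div_le_div_of_nonneg_right h6 h5.le
    _ = (Real.log 2 + 1) * (1 / (2:ℝ) ^ nk k) := by ring
    _ ≤ (Real.log 2 + 1) * (2 / ((k:ℝ)+1)) := by
        apply mul_le_mul_of_nonneg_left h7 (by positivity)
    _ = (2 * Real.log 2 + 2) / ((k:ℝ)+1) := by ring

lemma har_antitone : Antitone har := by
  intro a b hab
  unfold har
  apply div_le_div_of_nonneg_left (by norm_num) (by positivity)
  have : (a:ℝ) ≤ (b:ℝ) := Nat.cast_le.mpr hab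
  linarith

variable {φ : (ℕ → ℝ) → ℝ}

lemma phi_har_blockavg (hlin : IsLinearL1w φ) (hsym : IsSymmetricL1w φ) :
    φ har = φ ghat := by
  have h := phi_blockavg hlin hsym (C := 1) har_antitone (fun k => har_nonneg k)
    (fun k => le_of_eq rfl)
  exact h

lemma phi_har_eq_phi_g (hlin : IsLinearL1w φ) (hsym : IsSymmetricL1w φ)
    (hpos : IsPositiveL1w φ) : φ har = φ (Dop (fun _ => (1:ℝ))) := by
  rw [phi_har_blockavg hlin hsym]
  have hmem1 : MemL1w ghat := memL1w_of_harmonic_bound (fun k => ghat_harmonic_bound k)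
  have hmem2 : MemL1w (Dop (fun _ => (1:ℝ))) := memL1w_Dop (M := 1) (fun n => by norm_num)
  have h1 : φ (ghat - Dop (fun _ => (1:ℝ))) = 0 := by
    refine phi_quad hlin hsym hpos (A := 2) (fun k => ?_)
    exact ghat_quad k
  have h2 := phi_sub hlin hmem1 hmem2
  rw [h1] at h2
  linarith

end Stmt9
namespace Stmt9

def dil2 (y : ℕ → ℝ) : ℕ → ℝ := fun k => y (k / 2)

lemma memL1w_congr_dRear {x y : ℕ → ℝ} (h : dRear x = dRear y) (hy : MemL1w y) :
    MemL1w x := by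
  unfold MemL1w at hy ⊢
  rwa [h]

variable {φ : (ℕ → ℝ) → ℝ}

lemma phi_Sdil (hlin : IsLinearL1w φ) (hsym : IsSymmetricL1w φ) {v : ℕ → ℝ}
    (hv0 : ∀ k, 0 ≤ v k) (hmem : MemL1w v) :
    φ (Sfun (dil2 v)) = 2 * φ v := by
  set A1 : ℕ → ℝ := fun k => if k % 2 = 1 then v (k / 2) else 0 with hA1
  set A2 : ℕ → ℝ := fun k => if k % 2 = 0 ∧ k ≠ 0 then v ((k - 1) / 2) else 0 with hA2
  have hsplit : ∀ k, Sfun (dil2 v) k = A1 k + A2 k := by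
    intro k
    match k with
    | 0 =>
      show (0:ℝ) = A1 0 + A2 0
      rw [hA1, hA2]
      norm_num
    | k + 1 =>
      show v (k / 2) = A1 (k+1) + A2 (k+1)
      rw [hA1, hA2]
      simp only
      rcases Nat.even_or_odd k with he | ho
      · have he' : k % 2 = 0 := Nat.even_iff.mp he
        have h1 : (k+1) % 2 = 1 := by omega
        have h2 : (k+1) / 2 = k / 2 := by omega
        rw [if_pos h1, if_neg (by omega), h2]
        ring
      · have ho' : k % 2 = 1 := Nat.odd_iff.mp ho
        have h1 : (k+1) % 2 = 0 := by omega
        rw [if_neg (by omega), if_pos ⟨h1, by omega⟩]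
        have h2 : (k + 1 - 1) / 2 = k / 2 := by omega
        rw [h2]
        ring
  have hA1d : dRear A1 = dRear v := by
    refine dRear_spread (fun m => 2 * m + 1) (fun a b h => by dsimp only at h; omega)
      (fun m => ?_) (fun k hk => ?_)
    · show A1 (2 * m + 1) = v m
      rw [hA1]
      simp only
      rw [if_pos (by omega), show (2 * m + 1) / 2 = m from by omega]
    · show A1 k = 0
      rw [hA1]
      simp only
      rw [if_neg]
      intro h
      exact hk ⟨k / 2, by show 2 * (k / 2) + 1 = k; omega⟩
  have hA2d : dRear A2 = dRear v := by
    refine dRear_spread (fun m => 2 * m + 2) (fun a b h => by dsimp only at h; omega)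
      (fun m => ?_) (fun k hk => ?_)
    · show A2 (2 * m + 2) = v m
      rw [hA2]
      simp only
      rw [if_pos ⟨by omega, by omega⟩, show (2 * m + 2 - 1) / 2 = m from by omega]
    · show A2 k = 0
      rw [hA2]
      simp only
      rw [if_neg]
      rintro ⟨h1, h2⟩
      exact hk ⟨(k - 2) / 2, by show 2 * ((k - 2) / 2) + 2 = k; omega⟩
  have hA10 : 0 ≤ A1 := by
    intro k
    rw [hA1]
    simp only
    split
    · exact hv0 _
    · exact le_rfl
  have hA20 : 0 ≤ A2 := by
    intro k
    rw [hA2]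
    simp only
    split
    · exact hv0 _
    · exact le_rfl
  have hA1m : MemL1w A1 := memL1w_congr_dRear hA1d hmem
  have hA2m : MemL1w A2 := memL1w_congr_dRear hA2d hmem
  have h1 : φ A1 = φ v := hsym _ _ hA1m hmem hA10 (fun k => hv0 k) hA1d
  have h2 : φ A2 = φ v := hsym _ _ hA2m hmem hA20 (fun k => hv0 k) hA2d
  have h3 : Sfun (dil2 v) = A1 + A2 := funext hsplit
  rw [h3, phi_add hlin hA1m hA2m, h1, h2]
  ring

lemma memL1w_Sdil {v : ℕ → ℝ} {A : ℝ} (hvA : ∀ k, |v k| ≤ A / ((k:ℝ) + 1)) :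
    MemL1w (Sfun (dil2 v)) := by
  have hA0 : 0 ≤ A := by
    have := le_trans (abs_nonneg (v 0)) (hvA 0)
    simpa using this
  refine memL1w_of_harmonic_bound (C := 4 * A) (fun j => ?_)
  match j with
  | 0 =>
    have h0 : Sfun (dil2 v) 0 = 0 := rfl
    rw [h0, abs_zero]
    positivity
  | k + 1 =>
    have h0 : Sfun (dil2 v) (k + 1) = v (k / 2) := rfl
    rw [h0]
    have h1 := hvA (k / 2)
    have h2 : (k:ℝ) ≤ 2 * ((k / 2 : ℕ) : ℝ) + 1 := by
      have := Nat.div_add_mod k 2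
      have hm : k % 2 ≤ 1 := by omega
      have : 2 * (k / 2) + 1 ≥ k := by omega
      exact_mod_cast this
    refine le_trans h1 ?_
    rw [div_le_div_iff₀ (by positivity) (by positivity)]
    push_cast
    nlinarith [Nat.cast_nonneg (α := ℝ) k, Nat.cast_nonneg (α := ℝ) (k/2)]

lemma nk_succ_div2 (k : ℕ) : nk (k + 1) = nk (k / 2) + 1 := by
  obtain ⟨m, hm⟩ : ∃ m, nk (k+1) = m + 1 := by
    have h1 := nk_le (k+1)
    rcases Nat.eq_zero_or_pos (nk (k+1)) with h | h
    · rw [h] at h1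
      have h2 := nk_lt (k+1)
      rw [h] at h2
      have h3 : (2:ℕ) ^ (0+1) = 2 := by norm_num
      rw [h3] at h2
      omega
    · exact ⟨nk (k+1) - 1, by omega⟩
  have h1 := nk_le (k+1)
  have h2 := nk_lt (k+1)
  rw [hm] at h1 h2
  have e1 : 2 ^ (m+1) = 2 * 2 ^ m := by ring
  have e2 : 2 ^ (m+2) = 4 * 2 ^ m := by ring
  have hlog : nk (k / 2) = m := by
    unfold nk
    refine Nat.log_eq_of_pow_le_of_lt_pow ?_ ?_
    · omega
    · omega
  rw [hm, hlog]

lemma Dop_Sfun_eval (x : ℕ → ℝ) (k : ℕ) :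
    Dop (Sfun x) k = (1/2) * Sfun (dil2 (Dop x)) k := by
  match k with
  | 0 =>
    rw [Dop_eval]
    have h0 : nk 0 = 0 := by unfold nk; exact Nat.log_one_right 2
    rw [h0]
    show Real.log 2 * Sfun x 0 / (2:ℝ) ^ 0 = (1/2) * 0
    show Real.log 2 * 0 / (2:ℝ) ^ 0 = (1/2) * 0
    ring
  | k + 1 =>
    rw [Dop_eval]
    have hnk := nk_succ_div2 k
    rw [hnk]
    show Real.log 2 * Sfun x (nk (k/2) + 1) / (2:ℝ) ^ (nk (k/2) + 1)
      = (1/2) * Dop x (k / 2)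
    show Real.log 2 * x (nk (k/2)) / (2:ℝ) ^ (nk (k/2) + 1)
      = (1/2) * Dop x (k / 2)
    rw [Dop_eval, pow_succ, div_mul_eq_div_div]
    ring

lemma theta_Sinv (hlin : IsLinearL1w φ) (hsym : IsSymmetricL1w φ) :
    SInvariant (φ ∘ Dop) := by
  intro x hx
  obtain ⟨M, hM⟩ := hx
  have hM0 : 0 ≤ M := le_trans (abs_nonneg _) (hM 0)
  set p : ℕ → ℝ := fun n => x n + M with hp
  set q : ℕ → ℝ := fun _ => M with hq
  have hp0 : 0 ≤ p := by
    intro n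
    have := hM n
    rw [abs_le] at this
    show (0:ℝ) ≤ x n + M
    linarith [this.1]
  have hq0 : (0:ℕ→ℝ) ≤ q := fun n => hM0
  have hpB : ∀ n, |p n| ≤ 2 * M := by
    intro n
    have := hM n
    rw [abs_le] at this ⊢
    constructor
    · show -(2*M) ≤ x n + M
      linarith [this.1]
    · show x n + M ≤ 2*M
      linarith [this.2]
  have hqB : ∀ n : ℕ, |q n| ≤ M := fun n => by
    show |M| ≤ M
    rw [abs_of_nonneg hM0]
  -- key identity for nonneg bounded
  have hkey : ∀ (y : ℕ → ℝ) (A : ℝ), (0 ≤ y) → (∀ n, |y n| ≤ A) →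
      φ (Sfun (dil2 (Dop y))) = 2 * φ (Dop y) := by
    intro y A hy0 hyA
    exact phi_Sdil hlin hsym (fun k => Dop_nonneg hy0 k) (memL1w_Dop hyA)
  have hsplit2 : ∀ k, Sfun (dil2 (Dop x)) k
      = Sfun (dil2 (Dop p)) k - Sfun (dil2 (Dop q)) k := by
    intro k
    match k with
    | 0 =>
      show (0:ℝ) = 0 - 0
      ring
    | k + 1 =>
      show Dop x (k/2) = Dop p (k/2) - Dop q (k/2)
      rw [Dop_eval, Dop_eval, Dop_eval]
      show _ = Real.log 2 * (x (nk (k/2)) + M) / 2 ^ nk (k/2) - Real.log 2 * M / 2 ^ nk (k/2)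
      ring
  have hmem_x : MemL1w (Sfun (dil2 (Dop x))) := memL1w_Sdil (Dop_harmonic_bound hM)
  have hmem_p : MemL1w (Sfun (dil2 (Dop p))) := memL1w_Sdil (Dop_harmonic_bound hpB)
  have hmem_q : MemL1w (Sfun (dil2 (Dop q))) := memL1w_Sdil (Dop_harmonic_bound hqB)
  have hDx : φ (Dop x) = φ (Dop p) - φ (Dop q) := by
    refine phi_sub' hlin (fun k => ?_) (memL1w_Dop hpB) (memL1w_Dop hqB)
    rw [Dop_eval, Dop_eval, Dop_eval]
    show _ = Real.log 2 * (x (nk k) + M) / 2 ^ nk k - Real.log 2 * M / 2 ^ nk k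
    ring
  have step0 : φ (Dop (Sfun x)) = φ ((1/2 : ℝ) • (Sfun (dil2 (Dop x)))) := by
    congr 1
    funext k
    rw [Pi.smul_apply, smul_eq_mul]
    exact Dop_Sfun_eval x k
  have step1 : φ ((1/2 : ℝ) • (Sfun (dil2 (Dop x)))) = (1/2) * φ (Sfun (dil2 (Dop x))) :=
    phi_smul hlin _ hmem_x
  have step2 : φ (Sfun (dil2 (Dop x)))
      = φ (Sfun (dil2 (Dop p))) - φ (Sfun (dil2 (Dop q))) :=
    phi_sub' hlin hsplit2 hmem_p hmem_q
  have step3 : φ (Sfun (dil2 (Dop p))) = 2 * φ (Dop p) := hkey p (2*M) hp0 hpB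
  have step4 : φ (Sfun (dil2 (Dop q))) = 2 * φ (Dop q) := hkey q M hq0 hqB
  show φ (Dop (Sfun x)) = φ (Dop x)
  rw [step0, step1, step2, step3, step4, hDx]
  ring

end Stmt9
namespace Stmt9

variable {φ : (ℕ → ℝ) → ℝ}

lemma theta_linear (hlin : IsLinearL1w φ) : IsLinearLinfty (φ ∘ Dop) := by
  constructor
  · intro x y hx hy
    obtain ⟨Mx, hMx⟩ := hx
    obtain ⟨My, hMy⟩ := hy
    show φ (Dop (x + y)) = φ (Dop x) + φ (Dop y)
    have h1 : Dop (x + y) = Dop x + Dop y := by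
      funext k
      rw [Pi.add_apply, Dop_eval, Dop_eval, Dop_eval, Pi.add_apply]
      ring
    rw [h1, phi_add hlin (memL1w_Dop hMx) (memL1w_Dop hMy)]
  · intro c x hx
    obtain ⟨Mx, hMx⟩ := hx
    show φ (Dop (c • x)) = c * φ (Dop x)
    have h1 : Dop (c • x) = c • Dop x := by
      funext k
      rw [Pi.smul_apply, Dop_eval, Dop_eval, Pi.smul_apply, smul_eq_mul, smul_eq_mul]
      ring
    rw [h1, phi_smul hlin c (memL1w_Dop hMx)]

lemma backward_pos (hlin : IsLinearL1w φ) (hsym : IsSymmetricL1w φ)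
    (hBpos : ∀ x : ℕ → ℝ, Bdd x → 0 ≤ x → 0 ≤ (φ ∘ Dop) x) : IsPositiveL1w φ := by
  intro z hz hz0
  set zs : ℕ → ℝ := dRear z with hzs
  have h1 : φ z = φ zs := phi_dRear hsym hz hz0
  obtain ⟨Cb, hCb⟩ := hz
  have hCb' : ∀ n : ℕ, ((n:ℝ) + 1) * zs n ≤ Cb := fun n => hCb ⟨n, rfl⟩
  have hCb0 : 0 ≤ Cb := le_trans (mul_nonneg (by positivity) (dRear_nonneg z 0)) (hCb' 0)
  have hzsC : ∀ k, zs k ≤ Cb / ((k:ℝ) + 1) := by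
    intro k
    rw [le_div_iff₀ (by positivity)]
    calc zs k * ((k:ℝ)+1) = ((k:ℝ)+1) * zs k := by ring
      _ ≤ Cb := hCb' k
  have h2 := phi_blockavg hlin hsym (z := zs) (C := Cb)
    (dRear_antitone z) (fun k => dRear_nonneg z k) hzsC
  set xz : ℕ → ℝ := fun n => (∑ i ∈ Finset.range (2 ^ n), zs (2 ^ n - 1 + i)) / Real.log 2
    with hxz
  have hw : (fun k => (∑ i ∈ Finset.range (2 ^ nk k), zs (2 ^ nk k - 1 + i)) / (2:ℝ) ^ nk k)
      = Dop xz := by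
    funext k
    rw [Dop_eval, hxz]
    rw [div_eq_div_iff (by positivity) (by positivity)]
    field_simp
  have hzs_blk : ∀ n : ℕ, zs (2 ^ n - 1) ≤ Cb / (2:ℝ) ^ n := by
    intro n
    have h3 := hzsC (2 ^ n - 1)
    have h4 : ((2 ^ n - 1 : ℕ) : ℝ) + 1 = (2:ℝ) ^ n := by
      have := one_le_two_pow (n := n)
      push_cast [Nat.cast_sub this]
      ring
    rwa [h4] at h3
  have hS : ∀ n : ℕ, ∑ i ∈ Finset.range (2 ^ n), zs (2 ^ n - 1 + i) ≤ Cb := by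
    intro n
    calc ∑ i ∈ Finset.range (2 ^ n), zs (2 ^ n - 1 + i)
        ≤ ∑ _i ∈ Finset.range (2 ^ n), zs (2 ^ n - 1) :=
          Finset.sum_le_sum (fun i _ => dRear_antitone z (Nat.le_add_right _ _))
      _ = (2 ^ n : ℕ) * zs (2 ^ n - 1) := by rw [Finset.sum_const, Finset.card_range]; simp
      _ ≤ (2:ℝ) ^ n * (Cb / (2:ℝ) ^ n) := by
          push_cast
          exact mul_le_mul_of_nonneg_left (hzs_blk n) (by positivity)
      _ = Cb := by field_simp
  have hS0 : ∀ n : ℕ, 0 ≤ ∑ i ∈ Finset.range (2 ^ n), zs (2 ^ n - 1 + i) :=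
    fun n => Finset.sum_nonneg (fun i _ => dRear_nonneg z _)
  have hxzB : Bdd xz := by
    refine ⟨Cb / Real.log 2, fun n => ?_⟩
    rw [hxz]
    have h5 : (0:ℝ) ≤ (∑ i ∈ Finset.range (2 ^ n), zs (2 ^ n - 1 + i)) / Real.log 2 :=
      div_nonneg (hS0 n) log2_pos.le
    rw [abs_of_nonneg h5]
    exact div_le_div_of_nonneg_right (hS n) log2_pos.le
  have hxz0 : 0 ≤ xz := by
    intro n
    show (0:ℝ) ≤ (∑ i ∈ Finset.range (2 ^ n), zs (2 ^ n - 1 + i)) / Real.log 2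
    exact div_nonneg (hS0 n) log2_pos.le
  have h6 : 0 ≤ φ (Dop xz) := hBpos xz hxzB hxz0
  rw [h1, h2, hw]
  exact h6

end Stmt9


/-- A symmetric linear functional `φ` on `l_{1,∞}` is positive and normalised
(`φ({1/(n+1)}_n) = 1`) if and only if `B := φ ∘ D` is a Banach limit. -/
theorem stmt_9 (φ : (ℕ → ℝ) → ℝ) (hlin : IsLinearL1w φ) (hsym : IsSymmetricL1w φ) :
    (IsPositiveL1w φ ∧ φ (fun n => 1 / ((n : ℝ) + 1)) = 1) ↔
      IsBanachLimit (φ ∘ Dop) := by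
  constructor
  · rintro ⟨hpos, hnorm⟩
    refine ⟨Stmt9.theta_linear hlin, ?_, ?_, Stmt9.theta_Sinv hlin hsym⟩
    · intro x hx hx0
      obtain ⟨M, hM⟩ := hx
      exact hpos _ (Stmt9.memL1w_Dop hM) (Stmt9.Dop_nonneg hx0)
    · show φ (Dop (fun _ => (1:ℝ))) = 1
      rw [← Stmt9.phi_har_eq_phi_g hlin hsym hpos]
      exact hnorm
  · rintro ⟨hBlin, hBpos, hBone, hBshift⟩
    have hpos : IsPositiveL1w φ := Stmt9.backward_pos hlin hsym hBpos
    refine ⟨hpos, ?_⟩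
    show φ Stmt9.har = 1
    rw [Stmt9.phi_har_eq_phi_g hlin hsym hpos]
    exact hBone
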